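/- arXiv:2502.02974 — 2 statements merged into one kernel-verified Lean document; each statement's English description precedes it below -/
import Mathlib

section
/- Let r/s be an irreducible fraction with r,s coprime positive integers, s ≥ 2, and suppose r/s has regular continued fraction r/s = [a_1,...,a_{2m}] with a_1 ≥ 0, a_i ≥ 1 for i ≥ 2. For a matrix A = [[r,v],[s,u]] in SL(2,ℤ) (so ru − sv = 1), A equals M(a_1,...,a_{2m}) = R^{a_1}L^{a_2}···R^{a_{2m-1}}L^{a_{2m}} if and only if 0 < u < s. -/
open Matrix

/-- `M a = R^{a 0} * L^{a 1} * R^{a 2} * ⋯` : the alternating product of powers of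
`R = !![1,1;0,1]` and `L = !![1,0;1,1]` determined by the exponents `a`. -/
def Mword {n : ℕ} (a : Fin n → ℕ) : Matrix (Fin 2) (Fin 2) ℤ :=
  ((List.finRange n).map fun i =>
    if i.val % 2 = 0 then (!![1, 1; 0, 1] : Matrix (Fin 2) (Fin 2) ℤ) ^ (a i)
    else (!![1, 0; 1, 1] : Matrix (Fin 2) (Fin 2) ℤ) ^ (a i)).prod

/-- The value of the regular continued fraction `[a_1, ..., a_k]`. -/
def cfVal : List ℤ → ℚ
  | [] => 0
  | [a] => (a : ℚ)
  | a :: l => (a : ℚ) + 1 / cfVal l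

namespace MwordAux

def Rm : Matrix (Fin 2) (Fin 2) ℤ := !![1, 1; 0, 1]
def Lm : Matrix (Fin 2) (Fin 2) ℤ := !![1, 0; 1, 1]

def Pg : ℕ → List ℕ → Matrix (Fin 2) (Fin 2) ℤ
  | _, [] => 1
  | k, x :: t => (if k % 2 = 0 then Rm else Lm) ^ x * Pg (k + 1) t

lemma aux_prod : ∀ (n : ℕ) (k : ℕ) (a : Fin n → ℕ),
    ((List.finRange n).map fun i =>
      (if (k + i.val) % 2 = 0 then Rm else Lm) ^ a i).prod = Pg k (List.ofFn a) := by
  intro n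
  induction n with
  | zero => intro k a; simp [Pg]
  | succ n ih =>
    intro k a
    rw [List.finRange_succ, List.map_cons, List.prod_cons, List.map_map, List.ofFn_succ]
    have hmap : ((fun i : Fin (n+1) => (if (k + i.val) % 2 = 0 then Rm else Lm) ^ a i) ∘ Fin.succ)
        = fun i : Fin n => (if (k + 1 + i.val) % 2 = 0 then Rm else Lm) ^ (a ∘ Fin.succ) i := by
      funext i
      simp only [Function.comp_apply]
      have h2 : (k + (Fin.succ i).val) % 2 = (k + 1 + i.val) % 2 := by
        simp only [Fin.val_succ]; omega
      rw [h2]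
    rw [hmap, ih (k + 1) (a ∘ Fin.succ)]
    show (if (k + (0 : Fin (n+1)).val) % 2 = 0 then Rm else Lm) ^ a 0 * _
      = (if k % 2 = 0 then Rm else Lm) ^ a 0 * Pg (k + 1) (List.ofFn (a ∘ Fin.succ))
    norm_num

lemma Mword_eq_Pg {n : ℕ} (a : Fin n → ℕ) : Mword a = Pg 0 (List.ofFn a) := by
  rw [← aux_prod n 0 a]
  unfold Mword
  congr 1
  apply List.map_congr_left
  intro i _
  simp [Rm, Lm]

lemma Pg_two : ∀ (t : List ℕ) (k : ℕ), Pg (k + 2) t = Pg k t := by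
  intro t
  induction t with
  | nil => intro k; rfl
  | cons x t ih =>
    intro k
    show (if (k + 2) % 2 = 0 then Rm else Lm) ^ x * Pg (k + 3) t
      = (if k % 2 = 0 then Rm else Lm) ^ x * Pg (k + 1) t
    have h2 : (k + 2) % 2 = k % 2 := by omega
    rw [h2]
    congr 1
    exact ih (k + 1)

lemma Pg_pair (x y : ℕ) (t : List ℕ) :
    Pg 0 (x :: y :: t) = Rm ^ x * Lm ^ y * Pg 0 t := by
  show Rm ^ x * ((if 1 % 2 = 0 then Rm else Lm) ^ y * Pg 2 t) = _
  norm_num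
  rw [Pg_two t 0, mul_assoc]

lemma Rpow (n : ℕ) : Rm ^ n = !![1, (n : ℤ); 0, 1] := by
  induction n with
  | zero => simp [Matrix.one_fin_two]
  | succ n ih =>
    rw [pow_succ, ih, Rm, Matrix.mul_fin_two]
    norm_num [add_comm]

lemma Lpow (n : ℕ) : Lm ^ n = !![1, 0; (n : ℤ), 1] := by
  induction n with
  | zero => simp [Matrix.one_fin_two]
  | succ n ih =>
    rw [pow_succ, ih, Lm, Matrix.mul_fin_two]
    norm_num

lemma detPg : ∀ (t : List ℕ) (k : ℕ), (Pg k t).det = 1 := by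
  intro t
  induction t with
  | nil => intro k; simp [Pg]
  | cons x t ih =>
    intro k
    show ((if k % 2 = 0 then Rm else Lm) ^ x * Pg (k + 1) t).det = 1
    rw [Matrix.det_mul, Matrix.det_pow, ih (k + 1)]
    split <;> simp [Rm, Lm, Matrix.det_fin_two_of]

lemma cf_cons (x y : ℤ) (l : List ℤ) :
    cfVal (x :: y :: l) = (x : ℚ) + 1 / cfVal (y :: l) := rfl

lemma cf_pair (x y : ℤ) : cfVal [x, y] = (x : ℚ) + 1 / (y : ℚ) := rfl

/-- The key structural lemma about alternating words. -/
theorem key : ∀ (l : List ℕ), l.length % 2 = 0 → l ≠ [] → (∀ x ∈ l.tail, 1 ≤ x) →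
    ∃ p p' q q' : ℤ, Pg 0 l = !![p, p'; q, q'] ∧ 0 ≤ p' ∧ p' < p ∧ 1 ≤ q' ∧ q' ≤ q ∧
      (p : ℚ) / (q : ℚ) = cfVal (l.map fun x : ℕ => (x : ℤ))
  | [] => fun _ hne _ => absurd rfl hne
  | [x] => fun h2 _ _ => by simp at h2
  | x :: y :: t => fun h2 _ ht => by
    have hy : 1 ≤ y := ht y (by simp)
    have hyZ : (1 : ℤ) ≤ (y : ℤ) := by exact_mod_cast hy
    have hxZ : (0 : ℤ) ≤ (x : ℤ) := Int.ofNat_nonneg x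
    match t with
    | [] =>
      refine ⟨1 + x * y, x, y, 1, ?_, hxZ, ?_, le_refl 1, hyZ, ?_⟩
      · rw [Pg_pair, show Pg 0 [] = 1 from rfl, mul_one, Rpow, Lpow, Matrix.mul_fin_two]
        norm_num
      · nlinarith
      · rw [List.map_cons, List.map_cons, List.map_nil, cf_pair]
        have hy0 : ((y : ℤ) : ℚ) ≠ 0 := by
          have : (1 : ℚ) ≤ ((y : ℤ) : ℚ) := by exact_mod_cast hyZ
          linarith
        field_simp
        push_cast
        ring
    | c :: t' =>
      have hlen : (c :: t').length % 2 = 0 := by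
        simp only [List.length_cons] at h2 ⊢; omega
      have htail : ∀ z ∈ (c :: t').tail, 1 ≤ z := by
        intro z hz
        exact ht z (by simp at hz ⊢; tauto)
      obtain ⟨p, p', q, q', hPg, hp'0, hpp', hq'1, hq'q, hcf⟩ :=
        key (c :: t') hlen (by simp) htail
      have hp1 : (1 : ℤ) ≤ p := by linarith
      have hq1 : (1 : ℤ) ≤ q := by linarith
      have hxy : (0 : ℤ) ≤ (x : ℤ) * y := mul_nonneg hxZ (by linarith)
      have hyZ0 : (0 : ℤ) ≤ (y : ℤ) := by linarith
      have hq'0 : (0 : ℤ) ≤ q' := by linarith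
      refine ⟨(1 + x * y) * p + x * q, (1 + x * y) * p' + x * q',
        y * p + q, y * p' + q', ?_, ?_, ?_, ?_, ?_, ?_⟩
      · rw [Pg_pair, Rpow, Lpow, Matrix.mul_fin_two, hPg, Matrix.mul_fin_two]
        ext i j
        fin_cases i <;> fin_cases j <;> simp <;> ring
      · nlinarith [mul_nonneg hxy hp'0, mul_nonneg hxZ hq'0]
      · nlinarith [mul_nonneg hxy (by linarith : (0:ℤ) ≤ p - p'),
          mul_nonneg hxZ (by linarith : (0:ℤ) ≤ q - q')]
      · nlinarith [mul_nonneg hyZ0 hp'0]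
      · nlinarith [mul_nonneg hyZ0 (by linarith : (0:ℤ) ≤ p - p')]
      · have hcf2 : cfVal (((c : ℤ)) :: t'.map (fun x : ℕ => (x : ℤ))) = (p : ℚ) / q := by
          rw [← List.map_cons]; exact hcf.symm
        rw [List.map_cons, List.map_cons, List.map_cons, cf_cons, cf_cons, hcf2]
        have hp0 : (0 : ℚ) < (p : ℚ) := by exact_mod_cast lt_of_lt_of_le one_pos hp1
        have hq0 : (0 : ℚ) < (q : ℚ) := by exact_mod_cast lt_of_lt_of_le one_pos hq1
        have hyQ : (1 : ℚ) ≤ ((y : ℕ) : ℚ) := by exact_mod_cast hy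
        have hden : (0 : ℚ) < ((y : ℕ) : ℚ) * (p : ℚ) + q := by nlinarith
        push_cast
        rw [one_div_div]
        have h1 : ((y : ℕ) : ℚ) + (q : ℚ) / p = (((y : ℕ) : ℚ) * p + q) / p := by
          field_simp
        rw [h1, one_div_div]
        have h4 : ((x : ℕ) : ℚ) + (p : ℚ) / (((y : ℕ) : ℚ) * (p : ℚ) + (q : ℚ))
            = (((x : ℕ) : ℚ) * (((y : ℕ) : ℚ) * (p : ℚ) + (q : ℚ)) + (p : ℚ))
              / (((y : ℕ) : ℚ) * (p : ℚ) + (q : ℚ)) := by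
          field_simp
        rw [h4]
        rw [div_eq_div_iff (ne_of_gt hden) (ne_of_gt hden)]
        ring

end MwordAux

theorem Mword_iff_reduced {m : ℕ} (hm : 1 ≤ m) (a : Fin (2 * m) → ℕ)
    (ha : ∀ i, 1 ≤ i.val → 1 ≤ a i)
    (r s v u : ℤ) (hr : 0 < r) (hs : 2 ≤ s) (hcop : IsCoprime r s)
    (hdet : r * u - s * v = 1)
    (hcf : (r : ℚ) / s = cfVal ((List.finRange (2 * m)).map fun i => (a i : ℤ))) :
    (!![r, v; s, u] : Matrix (Fin 2) (Fin 2) ℤ) = Mword a ↔ 0 < u ∧ u < s := by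
  classical
  open MwordAux in
  set l : List ℕ := List.ofFn a with hl
  have hbridge : Mword a = Pg 0 l := Mword_eq_Pg a
  have hlen : l.length = 2 * m := by simp [hl]
  have hlen2 : l.length % 2 = 0 := by omega
  have hne : l ≠ [] := by
    intro h
    rw [h] at hlen
    simp at hlen
    omega
  have htail : ∀ x ∈ l.tail, 1 ≤ x := by
    intro x hx
    rw [List.mem_iff_getElem] at hx
    obtain ⟨j, hj, hxe⟩ := hx
    have hj' : j + 1 < l.length := by
      have := List.length_tail (l := l)
      omega
    rw [List.getElem_tail] at hxe
    have : l[j + 1] = a ⟨j + 1, by omega⟩ := by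
      simp [hl, List.getElem_ofFn]
    rw [this] at hxe
    rw [← hxe]
    exact ha _ (by simp)
  obtain ⟨p, p', q, q', hPg, hp'0, hpp', hq'1, hq'q, hcf'⟩ := key l hlen2 hne htail
  -- identify (r, s) with (p, q)
  have hmap : (List.finRange (2 * m)).map (fun i => ((a i : ℤ))) = l.map (fun x : ℕ => (x : ℤ)) := by
    rw [hl, List.map_ofFn, List.ofFn_eq_map]
    rfl
  have hrs : (r : ℚ) / s = (p : ℚ) / q := by rw [hcf, hmap, hcf']
  have hq1 : (1 : ℤ) ≤ q := le_trans hq'1 hq'q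
  have hsQ : ((s : ℤ) : ℚ) ≠ 0 := by
    have : (2 : ℚ) ≤ (s : ℚ) := by exact_mod_cast hs
    linarith
  have hqQ : ((q : ℤ) : ℚ) ≠ 0 := by
    have : (1 : ℚ) ≤ (q : ℚ) := by exact_mod_cast hq1
    linarith
  have hcross : r * q = p * s := by
    rw [div_eq_div_iff hsQ hqQ] at hrs
    exact_mod_cast hrs
  have hdetP : p * q' - p' * q = 1 := by
    have := detPg l 0
    rw [hPg, Matrix.det_fin_two_of] at this
    linarith
  have hcopPQ : IsCoprime p q := ⟨q', -p', by linear_combination hdetP⟩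
  have hsq : s ∣ q := by
    refine hcop.symm.dvd_of_dvd_mul_left ⟨p, by linarith⟩
  have hqs : q ∣ s := by
    refine hcopPQ.symm.dvd_of_dvd_mul_left ⟨r, by linarith⟩
  have hseq : s = q := Int.dvd_antisymm (by linarith) (by linarith) hsq hqs
  have hreq : r = p := by
    have hq0 : q ≠ 0 := by linarith
    have : r * q = p * q := by rw [hcross, hseq]
    exact mul_right_cancel₀ hq0 this
  have hMeq : Mword a = !![r, p'; s, q'] := by
    rw [hbridge, hPg, hreq, hseq]
  have hdet2 : r * q' - s * p' = 1 := by rw [hreq, hseq]; linarith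
  constructor
  · intro hM
    rw [hMeq] at hM
    have hu : u = q' := by
      have := congrFun (congrFun hM 1) 1
      simpa using this
    have hv : v = p' := by
      have := congrFun (congrFun hM 0) 1
      simpa using this
    subst hu hv
    refine ⟨by linarith, ?_⟩
    rcases lt_or_eq_of_le (hseq ▸ hq'q) with h | h
    · exact h
    · exfalso
      rw [h] at hdet
      have heq : s * (r - v) = 1 := by linear_combination hdet
      have h1 : s ∣ 1 := ⟨r - v, heq.symm⟩
      have := Int.le_of_dvd one_pos h1
      omega
  · rintro ⟨hu0, hus⟩
    have hdvd : s ∣ (u - q') := by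
      refine hcop.symm.dvd_of_dvd_mul_left ⟨v - p', ?_⟩
      linear_combination hdet - hdet2
    have hq's : q' ≤ s := hseq ▸ hq'q
    have huq : u - q' = 0 := by
      refine Int.eq_zero_of_abs_lt_dvd hdvd ?_
      rw [abs_lt]
      constructor <;> linarith
    have hu : u = q' := by linarith
    have hv : v = p' := by
      have : s * v = s * p' := by
        rw [hu] at hdet
        linarith [hdet, hdet2]
      exact mul_left_cancel₀ (by linarith : s ≠ 0) this
    rw [hMeq, hu, hv]
end

section
/- Let r/s and r'/s be irreducible fractions with s ≥ 1 and r + r' ≡ 0 (mod s), with 1 ≤ n < r/s < r'/s < n+1 for some integer n. If r/s = [n, a_2, ..., a_k] as a regular continued fraction, then a_2 ≥ 2 and r'/s = [n, 1, a_2 − 1, a_3, ..., a_k]. -/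
lemma cfVal_cons_cons (a b : ℤ) (l : List ℤ) :
    cfVal (a :: b :: l) = (a : ℚ) + 1 / cfVal (b :: l) := rfl

lemma cfVal_ge_one : ∀ l : List ℤ, l ≠ [] → (∀ x ∈ l, 1 ≤ x) → 1 ≤ cfVal l
  | [], h, _ => absurd rfl h
  | [a], _, h => by
      have : (1:ℤ) ≤ a := h a (by simp)
      simp only [cfVal]; exact_mod_cast this
  | a :: b :: l, _, h => by
      have hb : 1 ≤ cfVal (b :: l) :=
        cfVal_ge_one (b :: l) (by simp) (fun x hx => h x (by simp [hx]))
      have ha : (1:ℚ) ≤ a := by exact_mod_cast h a (by simp)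
      have : 0 < 1 / cfVal (b :: l) := by positivity
      rw [cfVal_cons_cons]; linarith

lemma cfVal_pred (a : ℤ) (l : List ℤ) : cfVal ((a - 1) :: l) = cfVal (a :: l) - 1 := by
  cases l <;> simp [cfVal, cfVal_cons_cons] <;> push_cast <;> ring

lemma cfVal_le (a : ℤ) (l : List ℤ) (h : ∀ x ∈ l, 1 ≤ x) :
    cfVal (a :: l) ≤ (a : ℚ) + 1 := by
  cases l with
  | nil => simp [cfVal]
  | cons b l =>
    have hb : 1 ≤ cfVal (b :: l) := cfVal_ge_one _ (by simp) h
    have : 1 / cfVal (b :: l) ≤ 1 := by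
      rw [div_le_one (by linarith)]; linarith
    rw [cfVal_cons_cons]; linarith

theorem cf_of_complement (r r' s n a₂ : ℤ) (rest : List ℤ)
    (hs : 1 ≤ s) (hcop : IsCoprime r s) (hcop' : IsCoprime r' s)
    (hsum : (s : ℤ) ∣ (r + r'))
    (hn : 1 ≤ n)
    (h1 : (n : ℚ) < (r : ℚ) / s) (h2 : (r : ℚ) / s < (r' : ℚ) / s)
    (h3 : (r' : ℚ) / s < (n : ℚ) + 1)
    (hpos : 1 ≤ a₂) (hrest : ∀ x ∈ rest, 1 ≤ x)
    (hcf : (r : ℚ) / s = cfVal (n :: a₂ :: rest)) :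
    2 ≤ a₂ ∧ (r' : ℚ) / s = cfVal (n :: 1 :: (a₂ - 1) :: rest) := by
  have hsQ : (0:ℚ) < (s:ℚ) := by exact_mod_cast (by linarith : (0:ℤ) < s)
  obtain ⟨m, hm⟩ := hsum
  have hmQ : (r : ℚ) / s + (r' : ℚ) / s = m := by
    field_simp
    have h := congrArg (Int.cast : ℤ → ℚ) hm
    push_cast at h
    linarith
  -- m = 2n+1
  have hmlow : (2*n : ℚ) < m := by push_cast; linarith
  have hmhigh : (m : ℚ) < 2*n + 2 := by push_cast; linarith
  have hm1 : m = 2*n + 1 := by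
    have l1 : 2*n < m := by exact_mod_cast hmlow
    have l2 : m < 2*n + 2 := by exact_mod_cast hmhigh
    omega
  have hr' : (r' : ℚ) / s = 2*n + 1 - (r : ℚ) / s := by
    rw [hm1] at hmQ; push_cast at hmQ ⊢; linarith
  set y := cfVal (a₂ :: rest) with hy
  have hy1 : 1 ≤ y := cfVal_ge_one _ (by simp) (by
    intro x hx
    rcases List.mem_cons.mp hx with h | h
    · omega
    · exact hrest x h)
  have hcf' : (r : ℚ) / s = (n : ℚ) + 1 / y := hcf
  -- r/s < n + 1/2 hence 1/y < 1/2 hence y > 2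
  have hx : (r : ℚ) / s < (n : ℚ) + 1/2 := by
    have := hr' ▸ h2
    linarith
  have hhalf : 1 / y < 1/2 := by linarith [hcf' ▸ hx]
  have hy2 : 2 < y := by
    by_contra h
    push_neg at h
    have : (1:ℚ)/2 ≤ 1/y := by
      apply one_div_le_one_div_of_le <;> linarith
    linarith
  have ha2 : 2 ≤ a₂ := by
    have := cfVal_le a₂ rest hrest
    have : (2:ℚ) < (a₂ : ℚ) + 1 := by linarith [hy ▸ this]
    exact_mod_cast (by linarith : (1:ℚ) < (a₂ : ℚ))
  refine ⟨ha2, ?_⟩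
  have hpred : cfVal ((a₂ - 1) :: rest) = y - 1 := cfVal_pred a₂ rest
  have hone : cfVal (1 :: (a₂ - 1) :: rest) = 1 + 1 / (y - 1) := by
    rw [cfVal_cons_cons, hpred]; norm_num
  have hfin : cfVal (n :: 1 :: (a₂ - 1) :: rest) = (n : ℚ) + 1 / (1 + 1/(y-1)) := by
    rw [cfVal_cons_cons, hone]
  rw [hfin, hr', hcf']
  have hy0 : y ≠ 0 := by linarith
  have hy1' : y - 1 ≠ 0 := by intro h; rw [sub_eq_zero] at h; linarith
  field_simp
  ring_nf
  rw [mul_inv_cancel₀ hy0, pow_two, mul_assoc, mul_inv_cancel₀ hy0]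
  ring
end
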